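/- Assume every hospital's preference is substitutable. Fix a doctor d and a preference P_d, assume the set {x ∈ 𝐗_d : {x} ≻_{x_H} ∅ and {x} P_d ∅} is nonempty, and let x̄ be its P_d-maximum. Let P̃_{−d} be the profile in which every doctor i ≠ d ranks ∅ above every contract. Then the doctor-optimal rule gives φ̄_d(P_d, P̃_{−d}) = {x̄}; in particular {x̄} ∈ O^{φ̄}(P_d). -/

import Mathlib

set_option linter.unusedSectionVars false

namespace Matching

open Finset

/-- A many-to-one matching market with contracts: each contract `x` involves exactly one
doctor `xD x` and one hospital `xH x`; each hospital `h` has a fixed antisymmetric,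
transitive and complete preference `prH h`, modelled as a linear order on sets of
contracts (only its comparisons between allocations of contracts involving `h` matter). -/
structure Market (D H X : Type*) where
  xD : X → D
  xH : X → H
  prH : H → LinearOrder (Finset X)

/-- A doctor's preference: an antisymmetric, transitive and complete preference, modelled
as a linear order on sets of contracts (only comparisons between `∅` and singletons of
contracts involving the doctor matter). -/
abbrev Pref (X : Type*) := LinearOrder (Finset X)

/-- A profile of doctors' preferences. -/
abbrev Profile (D X : Type*) := D → Pref X

variable {D H X : Type*}
variable [DecidableEq D] [DecidableEq H] [DecidableEq X] [Fintype D] [Fintype H] [Fintype X]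

/-- `Y_d` : the contracts in `Y` involving doctor `d`. -/
def docPart (M : Market D H X) (Y : Finset X) (d : D) : Finset X :=
  Y.filter fun x => M.xD x = d

/-- `Y_h` : the contracts in `Y` involving hospital `h`. -/
def hospPart (M : Market D H X) (Y : Finset X) (h : H) : Finset X :=
  Y.filter fun x => M.xH x = h

/-- An allocation: distinct contracts involve distinct doctors. -/
def IsAllocation (M : Market D H X) (Z : Finset X) : Prop :=
  ∀ x ∈ Z, ∀ y ∈ Z, M.xD x = M.xD y → x = y

/-- `A(Y)` : the allocations contained in `Y`. -/
def allocs (M : Market D H X) (Y : Finset X) : Finset (Finset X) :=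
  Y.powerset.filter fun Z => ∀ x ∈ Z, ∀ y ∈ Z, M.xD x = M.xD y → x = y

lemma empty_mem_allocs (M : Market D H X) (Y : Finset X) : ∅ ∈ allocs M Y := by
  simp [allocs]

/-- The best allocation contained in `Y` according to the linear order `pr`. -/
def bestAlloc (M : Market D H X) (pr : Pref X) (Y : Finset X) : Finset X :=
  @Finset.max' _ pr (allocs M Y) ⟨∅, empty_mem_allocs M Y⟩

/-- `C_h(Y)` : hospital `h`'s choice set from `Y` (the `≻_h`-maximum of `A(Y_h)`). -/
def Ch (M : Market D H X) (h : H) (Y : Finset X) : Finset X :=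
  bestAlloc M (M.prH h) (hospPart M Y h)

/-- `C_d(P_d, Y)` : doctor `d`'s choice set from `Y` (the `P_d`-maximum of `A(Y_d)`). -/
def Cd (M : Market D H X) (Pd : Pref X) (d : D) (Y : Finset X) : Finset X :=
  bestAlloc M Pd (docPart M Y d)

/-- `C_H(Y) = ∪_{h ∈ H} C_h(Y)`. -/
def CH (M : Market D H X) (Y : Finset X) : Finset X :=
  univ.biUnion fun h => Ch M h Y

/-- `C_D(Y) = ∪_{d ∈ D} C_d(Y)`. -/
def CD (M : Market D H X) (P : Profile D X) (Y : Finset X) : Finset X :=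
  univ.biUnion fun d => Cd M (P d) d Y

/-- Substitutability of hospital `h`'s preference: `x ∈ C_h(W)` and `x ∈ Y_h ⊆ W_h`
imply `x ∈ C_h(Y)`. -/
def Substitutable (M : Market D H X) (h : H) : Prop :=
  ∀ W Y : Finset X, hospPart M Y h ⊆ hospPart M W h →
    ∀ x ∈ hospPart M Y h, x ∈ Ch M h W → x ∈ Ch M h Y

/-- The sets `X^t` of still-available contracts in the doctor-proposing deferred
acceptance algorithm (0-based: index `t` corresponds to iteration `t+1`). -/
def DDAsets (M : Market D H X) (P : Profile D X) : ℕ → Finset X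
  | 0 => univ
  | t + 1 =>
      DDAsets M P t \ (CD M P (DDAsets M P t) \ CH M (CD M P (DDAsets M P t)))

/-- `O^t` : the offers made by the doctors at iteration `t` of D-DA (0-based). -/
def offers (M : Market D H X) (P : Profile D X) (t : ℕ) : Finset X :=
  CD M P (DDAsets M P t)

/-- `O_A^t = ∪_{k ≤ t} O^k` : the accumulated offers up to iteration `t` (0-based). -/
def accOffers (M : Market D H X) (P : Profile D X) (t : ℕ) : Finset X :=
  (Finset.range (t + 1)).biUnion fun k => offers M P k

/-- D-DA has stopped at iteration `t`: all offers are accepted. -/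
def DDAstopped (M : Market D H X) (P : Profile D X) (t : ℕ) : Prop :=
  CH M (offers M P t) = offers M P t

/-- The (0-based) last iteration of D-DA, i.e. `T - 1` where `T` is the number of
iterations of D-DA. -/
noncomputable def DDAlast (M : Market D H X) (P : Profile D X) : ℕ :=
  sInf {t | DDAstopped M P t}

/-- The output of D-DA (the algorithm provably stops by iteration `Fintype.card X`,
and once stopped the offer sets stay constant). -/
def DDAoutput (M : Market D H X) (P : Profile D X) : Finset X :=
  CH M (offers M P (Fintype.card X))

/-- The doctor-optimal rule `φ̄`, giving doctor `d`'s outcome `φ̄_d(P)` (an element of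
`A(𝐗_d)`, i.e. `∅` or a singleton). -/
def docOpt (M : Market D H X) (P : Profile D X) (d : D) : Finset X :=
  docPart M (DDAoutput M P) d

/-- The sets `X^t` of still-available contracts in the hospital-proposing deferred
acceptance algorithm (0-based). -/
def HDAsets (M : Market D H X) (P : Profile D X) : ℕ → Finset X
  | 0 => univ
  | t + 1 =>
      HDAsets M P t \ (CH M (HDAsets M P t) \ CD M P (CH M (HDAsets M P t)))

/-- The offers made by the hospitals at iteration `t` of H-DA (0-based). -/
def hOffers (M : Market D H X) (P : Profile D X) (t : ℕ) : Finset X :=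
  CH M (HDAsets M P t)

/-- The output of H-DA. -/
def HDAoutput (M : Market D H X) (P : Profile D X) : Finset X :=
  CD M P (hOffers M P (Fintype.card X))

/-- The hospital-optimal rule `φ̲`, giving doctor `d`'s outcome `φ̲_d(P)`. -/
def hospOpt (M : Market D H X) (P : Profile D X) (d : D) : Finset X :=
  docPart M (HDAoutput M P) d

/-- The option set `O^φ(P_d)` left open by `P_d` at the rule `φ`. -/
def optionSet (rule : Profile D X → D → Finset X) (d : D) (Pd : Pref X) :
    Set (Finset X) :=
  {S | ∃ P : Profile D X, P d = Pd ∧ S = rule P d}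

open scoped Classical in
/-- `W_d(pr, S)` : the `pr`-worst element of the (finite) set `S` of outcomes. -/
noncomputable def worstIn (pr : Pref X) (S : Set (Finset X)) : Finset X :=
  if h : S.Nonempty then
    @Finset.min' _ pr (Set.toFinite S).toFinset ((Set.Finite.toFinset_nonempty _).mpr h)
  else ∅

open scoped Classical in
/-- The `pr`-best element of the (finite) set `S` of outcomes. -/
noncomputable def bestIn (pr : Pref X) (S : Set (Finset X)) : Finset X :=
  if h : S.Nonempty then
    @Finset.max' _ pr (Set.toFinite S).toFinset ((Set.Finite.toFinset_nonempty _).mpr h)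
  else ∅

/-- `P'_d` is a manipulation of the rule at `P_d` : for some subprofile of the other
doctors, reporting `P'_d` gives a strictly `P_d`-better outcome than truth-telling. -/
def IsManip (rule : Profile D X → D → Finset X) (d : D) (Pd P'd : Pref X) : Prop :=
  ∃ P : Profile D X, P d = Pd ∧
    Pd.lt (rule P d) (rule (Function.update P d P'd) d)

/-- `P'_d` is an obvious manipulation of the rule at `P_d`. -/
def IsObviousManip (rule : Profile D X → D → Finset X) (d : D) (Pd P'd : Pref X) :
    Prop :=
  IsManip rule d Pd P'd ∧
    (Pd.lt (worstIn Pd (optionSet rule d Pd)) (worstIn Pd (optionSet rule d P'd)) ∨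
     Pd.lt (bestIn Pd (optionSet rule d Pd)) (bestIn Pd (optionSet rule d P'd)))

/-- A rule is not obviously manipulable (NOM). -/
def NOM (rule : Profile D X → D → Finset X) : Prop :=
  ∀ (d : D) (Pd P'd : Pref X), ¬ IsObviousManip rule d Pd P'd

/-- A rule is obviously manipulable (OM). -/
def OM (rule : Profile D X → D → Finset X) : Prop :=
  ∃ (d : D) (Pd P'd : Pref X), IsObviousManip rule d Pd P'd

/-- `Y` is a stable allocation at the profile `P` : it is an individually rational
allocation and admits no blocking contract. -/
def IsStable (M : Market D H X) (P : Profile D X) (Y : Finset X) : Prop :=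
  IsAllocation M Y ∧ CD M P Y = Y ∧ CH M Y = Y ∧
    ∀ x : X, x ∉ Y →
      ¬ (x ∈ Cd M (P (M.xD x)) (M.xD x) (insert x Y) ∧
         x ∈ Ch M (M.xH x) (insert x Y))

/-- `⌈kq⌉` where `k` is the number of stable allocations at `P`. -/
noncomputable def quantileIndex (M : Market D H X) (P : Profile D X) (q : ℝ) : ℕ :=
  ⌈(Set.ncard {Y : Finset X | IsStable M P Y} : ℝ) * q⌉₊

/-- `Z` is doctor `d`'s `⌈kq⌉`-th best outcome (according to `P d`) among the `k` stable
allocations at `P` : it is the outcome of some stable allocation, strictly fewer than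
`⌈kq⌉` stable allocations give `d` a strictly better outcome, and at least `⌈kq⌉` stable
allocations give `d` a weakly better outcome. -/
def IsQuantileOutcome (M : Market D H X) (P : Profile D X) (q : ℝ) (d : D)
    (Z : Finset X) : Prop :=
  (∃ Y : Finset X, IsStable M P Y ∧ docPart M Y d = Z) ∧
    Set.ncard {Y : Finset X | IsStable M P Y ∧ (P d).lt Z (docPart M Y d)} <
      quantileIndex M P q ∧
    quantileIndex M P q ≤
      Set.ncard {Y : Finset X | IsStable M P Y ∧ (P d).le Z (docPart M Y d)}

/-! ### Auxiliary lemmas -/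

private lemma LO.le_of_lt {α : Type*} (pr : LinearOrder α) {a b : α}
    (h : pr.lt a b) : pr.le a b :=
  ((pr.lt_iff_le_not_ge a b).mp h).1

private lemma LO.lt_of_lt_of_le {α : Type*} (pr : LinearOrder α) {a b c : α}
    (h1 : pr.lt a b) (h2 : pr.le b c) : pr.lt a c :=
  (pr.lt_iff_le_not_ge a c).mpr ⟨pr.le_trans _ _ _ ((pr.lt_iff_le_not_ge a b).mp h1).1 h2,
    fun hc => ((pr.lt_iff_le_not_ge a b).mp h1).2 (pr.le_trans _ _ _ h2 hc)⟩

private lemma LO.antisymm {α : Type*} (pr : LinearOrder α) {a b : α}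
    (h1 : pr.le a b) (h2 : pr.le b a) : a = b :=
  @le_antisymm α pr.toPartialOrder a b h1 h2

private lemma LO.not_lt {α : Type*} (pr : LinearOrder α) {a b : α}
    (h1 : pr.le a b) (h2 : pr.lt b a) : False :=
  ((pr.lt_iff_le_not_ge b b).mp (LO.lt_of_lt_of_le pr h2 h1)).2
    (pr.le_refl _)

lemma mem_allocs_docPart (M : Market D H X) (Y : Finset X) (i : D) (z : Finset X)
    (hz : z ∈ allocs M (docPart M Y i)) :
    z = ∅ ∨ ∃ x, x ∈ Y ∧ M.xD x = i ∧ z = {x} := by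
  simp only [allocs, mem_filter, mem_powerset] at hz
  obtain ⟨hsub, halloc⟩ := hz
  rcases z.eq_empty_or_nonempty with h | ⟨a, ha⟩
  · exact Or.inl h
  · right
    have haY : a ∈ docPart M Y i := hsub ha
    simp only [docPart, mem_filter] at haY
    refine ⟨a, haY.1, haY.2, ?_⟩
    ext b
    simp only [mem_singleton]
    constructor
    · intro hb
      have hbY := hsub hb
      simp only [docPart, mem_filter] at hbY
      exact halloc b hb a ha (hbY.2.trans haY.2.symm)
    · rintro rfl; exact ha

lemma bestAlloc_eq (M : Market D H X) (pr : Pref X) (Y : Finset X) (b : Finset X)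
    (hb : b ∈ allocs M Y) (hub : ∀ z ∈ allocs M Y, pr.le z b) :
    bestAlloc M pr Y = b :=
  LO.antisymm pr (@Finset.max'_le _ pr _ _ _ hub) (@Finset.le_max' _ pr _ _ hb)

lemma le_bestAlloc (M : Market D H X) (pr : Pref X) (Y : Finset X) (z : Finset X)
    (hz : z ∈ allocs M Y) : pr.le z (bestAlloc M pr Y) :=
  @Finset.le_max' _ pr _ _ hz

lemma bestAlloc_mem (M : Market D H X) (pr : Pref X) (Y : Finset X) :
    bestAlloc M pr Y ∈ allocs M Y :=
  @Finset.max'_mem _ pr _ _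

lemma Cd_empty_of_bad (M : Market D H X) (pri : Pref X) (i : D) (Y : Finset X)
    (h : ∀ w, M.xD w = i → pri.lt ({w} : Finset X) ∅) :
    Cd M pri i Y = ∅ := by
  refine bestAlloc_eq M pri _ _ (empty_mem_allocs M _) ?_
  intro z hz
  rcases mem_allocs_docPart M Y i z hz with rfl | ⟨x, _, hxd, rfl⟩
  · exact @le_refl _ pri.toPartialOrder.toPreorder _
  · exact LO.le_of_lt pri (h x hxd)

lemma Cd_choice (M : Market D H X) (Pd : Pref X) (d : D) (Y : Finset X) (xb : X)
    (hxb : xb ∈ Y) (hxbd : M.xD xb = d) (hxbP : Pd.lt (∅ : Finset X) {xb}) :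
    ∃ y, y ∈ Y ∧ M.xD y = d ∧ Cd M Pd d Y = {y} ∧ Pd.le ({xb} : Finset X) {y} := by
  have hmem : ({xb} : Finset X) ∈ allocs M (docPart M Y d) := by
    simp only [allocs, mem_filter, mem_powerset, singleton_subset_iff, docPart,
      mem_singleton]
    exact ⟨by simp [hxb, hxbd], fun a ha b hb _ => ha.trans hb.symm⟩
  have hle : Pd.le ({xb} : Finset X) (Cd M Pd d Y) := le_bestAlloc M Pd _ _ hmem
  rcases mem_allocs_docPart M Y d _ (bestAlloc_mem M Pd (docPart M Y d)) with h0 |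
    ⟨y, hyY, hyd, hy⟩
  · exfalso
    rw [show bestAlloc M Pd (docPart M Y d) = Cd M Pd d Y from rfl] at h0
    rw [h0] at hle
    exact LO.not_lt Pd hle hxbP
  · rw [show bestAlloc M Pd (docPart M Y d) = Cd M Pd d Y from rfl] at hy
    exact ⟨y, hyY, hyd, hy, hy ▸ hle⟩

lemma mem_allocs_singleton (M : Market D H X) (x : X) (z : Finset X)
    (hz : z ∈ allocs M ({x} : Finset X)) : z = ∅ ∨ z = {x} := by
  simp only [allocs, mem_filter, mem_powerset] at hz
  exact Finset.subset_singleton_iff.mp hz.1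

lemma singleton_mem_allocs_singleton (M : Market D H X) (x : X) :
    ({x} : Finset X) ∈ allocs M ({x} : Finset X) := by
  simp only [allocs, mem_filter, mem_powerset, mem_singleton]
  exact ⟨Finset.Subset.refl _, fun a ha b hb _ => ha.trans hb.symm⟩

lemma Ch_of_hospPart_empty (M : Market D H X) (h : H) (Y : Finset X)
    (hY : hospPart M Y h = ∅) : Ch M h Y = ∅ := by
  unfold Ch
  rw [hY]
  refine bestAlloc_eq M _ _ _ (empty_mem_allocs M _) ?_
  intro z hz
  simp only [allocs, mem_filter, mem_powerset, Finset.subset_empty] at hz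
  rw [hz.1]
  exact @le_refl _ (M.prH h).toPartialOrder.toPreorder _

lemma hospPart_singleton (M : Market D H X) (x : X) :
    hospPart M ({x} : Finset X) (M.xH x) = {x} := by
  rw [hospPart, Finset.filter_singleton, if_pos rfl]

lemma Ch_singleton_acc (M : Market D H X) (x : X)
    (hacc : (M.prH (M.xH x)).lt (∅ : Finset X) {x}) :
    Ch M (M.xH x) ({x} : Finset X) = {x} := by
  unfold Ch
  rw [hospPart_singleton]
  refine bestAlloc_eq M _ _ _ (singleton_mem_allocs_singleton M x) ?_
  intro z hz
  rcases mem_allocs_singleton M x z hz with rfl | rfl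
  · exact LO.le_of_lt _ hacc
  · exact @le_refl _ (M.prH (M.xH x)).toPartialOrder.toPreorder _

lemma Ch_singleton_rej (M : Market D H X) (x : X)
    (hrej : ¬ (M.prH (M.xH x)).lt (∅ : Finset X) {x}) :
    Ch M (M.xH x) ({x} : Finset X) = ∅ := by
  unfold Ch
  rw [hospPart_singleton]
  refine bestAlloc_eq M _ _ _ (empty_mem_allocs M _) ?_
  intro z hz
  rcases mem_allocs_singleton M x z hz with rfl | rfl
  · exact @le_refl _ (M.prH (M.xH x)).toPartialOrder.toPreorder _
  · exact @le_of_not_gt _ (M.prH (M.xH x)) _ _ hrej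

lemma CH_singleton_acc (M : Market D H X) (x : X)
    (hacc : (M.prH (M.xH x)).lt (∅ : Finset X) {x}) :
    CH M ({x} : Finset X) = {x} := by
  ext a
  simp only [CH, mem_biUnion, mem_univ, true_and]
  constructor
  · rintro ⟨h, hh⟩
    by_cases hx : M.xH x = h
    · subst hx; rwa [Ch_singleton_acc M x hacc] at hh
    · rw [Ch_of_hospPart_empty M h _ (by rw [hospPart, Finset.filter_singleton, if_neg hx])] at hh
      simp at hh
  · intro ha
    exact ⟨M.xH x, by rwa [Ch_singleton_acc M x hacc]⟩

lemma CH_singleton_rej (M : Market D H X) (x : X)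
    (hrej : ¬ (M.prH (M.xH x)).lt (∅ : Finset X) {x}) :
    CH M ({x} : Finset X) = ∅ := by
  ext a
  simp only [CH, mem_biUnion, mem_univ, true_and, notMem_empty, iff_false,
    not_exists]
  intro h
  by_cases hx : M.xH x = h
  · subst hx; rw [Ch_singleton_rej M x hrej]; simp
  · rw [Ch_of_hospPart_empty M h _ (by rw [hospPart, Finset.filter_singleton, if_neg hx])]; simp

/-- If `x̄` is the `P_d`-maximum of the nonempty set
`{x ∈ 𝐗_d : {x} ≻_{x_H} ∅ and {x} P_d ∅}`, and every doctor `i ≠ d` ranks `∅` above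
every contract, then the doctor-optimal rule gives `φ̄_d(P_d, P̃_{-d}) = {x̄}`; in
particular `{x̄} ∈ O^{φ̄}(P_d)`. -/
theorem docOpt_top_acceptable (M : Market D H X) (hsub : ∀ h : H, Substitutable M h)
    (d : D) (Pd : Pref X) (xb : X)
    (hxbd : M.xD xb = d)
    (hxbH : (M.prH (M.xH xb)).lt (∅ : Finset X) {xb})
    (hxbP : Pd.lt (∅ : Finset X) {xb})
    (hmax : ∀ w : X, M.xD w = d → (M.prH (M.xH w)).lt (∅ : Finset X) {w} →
      Pd.lt (∅ : Finset X) {w} → Pd.le ({w} : Finset X) {xb})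
    (P : Profile D X) (hPd : P d = Pd)
    (hothers : ∀ i : D, i ≠ d → ∀ w : X, M.xD w = i → (P i).lt ({w} : Finset X) ∅) :
    docOpt M P d = {xb} ∧ ({xb} : Finset X) ∈ optionSet (docOpt M) d Pd := by
  -- Under `P`, only doctor `d` ever makes offers.
  have hCD : ∀ Y : Finset X, CD M P Y = Cd M Pd d Y := by
    intro Y
    ext a
    simp only [CD, mem_biUnion, mem_univ, true_and]
    constructor
    · rintro ⟨i, hi⟩
      by_cases hid : i = d
      · subst hid; rwa [hPd] at hi
      · rw [Cd_empty_of_bad M (P i) i Y (fun w hw => hothers i hid w hw)] at hi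
        simp at hi
    · intro ha
      exact ⟨d, by rwa [hPd]⟩
  -- If the offer is `{xb}`, it persists.
  have hpersist : ∀ t : ℕ, offers M P t = {xb} → offers M P (t + 1) = {xb} := by
    intro t ht
    have hA : DDAsets M P (t + 1) = DDAsets M P t := by
      show DDAsets M P t \ (CD M P (DDAsets M P t) \ CH M (CD M P (DDAsets M P t)))
        = DDAsets M P t
      have hO : CD M P (DDAsets M P t) = {xb} := ht
      rw [hO, CH_singleton_acc M xb hxbH]
      simp
    show CD M P (DDAsets M P (t + 1)) = {xb}
    rw [hA]; exact ht
  -- Main invariant.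
  have key : ∀ t : ℕ, offers M P t = {xb} ∨
      (xb ∈ DDAsets M P t ∧ (DDAsets M P t).card + t ≤ Fintype.card X) := by
    intro t
    induction t with
    | zero =>
      right
      refine ⟨mem_univ xb, ?_⟩
      show (univ : Finset X).card + 0 ≤ Fintype.card X
      simp [card_univ]
    | succ t ih =>
      rcases ih with h | ⟨hmem, hcard⟩
      · exact Or.inl (hpersist t h)
      · obtain ⟨y, hyA, hyd, hCdy, hley⟩ :=
          Cd_choice M Pd d (DDAsets M P t) xb hmem hxbd hxbP
        have hO : offers M P t = {y} := by
          show CD M P (DDAsets M P t) = {y}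
          rw [hCD]; exact hCdy
        by_cases hacc : (M.prH (M.xH y)).lt (∅ : Finset X) {y}
        · -- the offered contract is accepted, so it must be `xb`
          have hyP : Pd.lt (∅ : Finset X) {y} := LO.lt_of_lt_of_le Pd hxbP hley
          have : ({y} : Finset X) = {xb} :=
            LO.antisymm Pd (hmax y hyd hacc hyP) hley
          have hyxb : y = xb := Finset.singleton_inj.mp this
          subst hyxb
          exact Or.inl (hpersist t hO)
        · -- the offered contract is rejected
          right
          have hCHO : CH M (CD M P (DDAsets M P t)) = ∅ := by
            rw [hCD, hCdy]; exact CH_singleton_rej M y hacc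
          have hA : DDAsets M P (t + 1) = DDAsets M P t \ {y} := by
            show DDAsets M P t \ (CD M P (DDAsets M P t) \
              CH M (CD M P (DDAsets M P t))) = DDAsets M P t \ {y}
            rw [hCHO, hCD, hCdy]
            simp
          have hxby : xb ≠ y := by
            rintro rfl; exact hacc hxbH
          constructor
          · rw [hA, mem_sdiff, mem_singleton]
            exact ⟨hmem, hxby⟩
          · have h1 : (DDAsets M P t \ {y}).card = (DDAsets M P t).card - 1 := by
              rw [card_sdiff_of_subset (by simpa using hyA)]
              simp
            have h2 : 1 ≤ (DDAsets M P t).card := card_pos.mpr ⟨y, hyA⟩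
            rw [hA, h1]
            omega
  -- At time `card X` the offer must be `{xb}`.
  have hfin : offers M P (Fintype.card X) = {xb} := by
    rcases key (Fintype.card X) with h | ⟨hmem, hcard⟩
    · exact h
    · exfalso
      have h0 : (DDAsets M P (Fintype.card X)).card = 0 := by omega
      rw [Finset.card_eq_zero] at h0
      rw [h0] at hmem
      simp at hmem
  have hout : DDAoutput M P = {xb} := by
    show CH M (offers M P (Fintype.card X)) = {xb}
    rw [hfin]
    exact CH_singleton_acc M xb hxbH
  have h1 : docOpt M P d = {xb} := by
    show docPart M (DDAoutput M P) d = {xb}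
    rw [hout, docPart, Finset.filter_singleton, if_pos hxbd]
  exact ⟨h1, ⟨P, hPd, h1.symm⟩⟩

end Matching
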